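/- Let G = (V,E) be a finite directed graph on n = |V| ≥ 1 vertices with at least one edge, and let 0 < ε < 1. Then there exists a nonnegative integer i with (1−ε/2)^{−i}/√n ≤ √n (i.e., i ≤ log_{1/(1−ε/2)} n) such that, setting t = (1−ε/2)^{−i}/√n, one has ρ*_{G_t} ≥ (1−ε)·ρ*_G. -/

import Mathlib

open Finset

lemma exists_pow_grid (q x : ℝ) (hq : 1 < q) (hx : 1 ≤ x) :
    ∃ i : ℕ, q ^ i ≤ x ∧ x < q ^ (i + 1) := by
  have hq0 : 0 < q := by linarith
  have hx0 : 0 < x := by linarith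
  set l := Real.logb q x with hl
  have hl0 : 0 ≤ l := Real.logb_nonneg hq hx
  refine ⟨⌊l⌋₊, ?_, ?_⟩
  · have h1 : q ^ ((⌊l⌋₊ : ℝ)) ≤ q ^ l :=
      Real.rpow_le_rpow_of_exponent_le hq.le (Nat.floor_le hl0)
    rw [Real.rpow_logb hq0 (ne_of_gt hq) hx0] at h1
    calc (q : ℝ) ^ ⌊l⌋₊ = q ^ ((⌊l⌋₊ : ℝ)) := (Real.rpow_natCast q _).symm
      _ ≤ x := h1
  · have h2 : l < ((⌊l⌋₊ + 1 : ℕ) : ℝ) := by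
      push_cast; exact Nat.lt_floor_add_one l
    have h3 : q ^ l < q ^ (((⌊l⌋₊ + 1 : ℕ) : ℝ)) :=
      Real.rpow_lt_rpow_of_exponent_lt hq h2
    rw [Real.rpow_logb hq0 (ne_of_gt hq) hx0, Real.rpow_natCast] at h3
    exact h3

lemma core_ineq (ε u a : ℝ) (hε0 : 0 < ε) (hε1 : ε < 1) (hu : 0 < u)
    (h1 : a ≤ u) (h2 : (1 - ε/2) * u < a) : (1 - ε) * (u^2 + a^2) ≤ 2*a*u := by
  nlinarith [mul_nonneg (sub_nonneg.2 h1) (sub_nonneg.2 h2.le), sq_nonneg (u - a),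
    mul_pos hu hu, mul_nonneg hε0.le (mul_pos hu hu).le, sq_nonneg a]

/-- `ρ*_{G_t}`: the maximum, over pairs of subsets `S, T ⊆ V` not both empty, of
`2·|E(S,T)|/(|S|/t + t·|T|)` (the maximum vertex-weighted subgraph density of the
bipartite graph `G_t`). -/
noncomputable def rhoGt {V : Type*} [Fintype V] [DecidableEq V]
    (E : Finset (V × V)) (t : ℝ) : ℝ :=
  sSup { x : ℝ | ∃ S T : Finset V, (S.Nonempty ∨ T.Nonempty) ∧
    x = 2 * ((E.filter (fun p => p.1 ∈ S ∧ p.2 ∈ T)).card : ℝ) /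
      ((S.card : ℝ) / t + t * (T.card : ℝ)) }

set_option maxHeartbeats 1000000 in
/-- For a finite directed graph on `n ≥ 1` vertices with at least
one edge and `0 < ε < 1`, there is a nonnegative integer `i` with
`(1−ε/2)^{−i}/√n ≤ √n` such that, for `t = (1−ε/2)^{−i}/√n`,
`ρ*_{G_t} ≥ (1−ε)·ρ*_G`. -/
theorem directed_density_grid_search
    {V : Type*} [Fintype V] [DecidableEq V]
    (hn : 1 ≤ Fintype.card V)
    (E : Finset (V × V)) (hE : E.Nonempty)
    (ε : ℝ) (hε0 : 0 < ε) (hε1 : ε < 1)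
    (ρstar : ℝ)
    (hρstar_ub : ∀ S T : Finset V, S.Nonempty → T.Nonempty →
      ((E.filter (fun p => p.1 ∈ S ∧ p.2 ∈ T)).card : ℝ) /
        Real.sqrt ((S.card : ℝ) * (T.card : ℝ)) ≤ ρstar)
    (hρstar_mem : ∃ S T : Finset V, S.Nonempty ∧ T.Nonempty ∧
      ((E.filter (fun p => p.1 ∈ S ∧ p.2 ∈ T)).card : ℝ) /
        Real.sqrt ((S.card : ℝ) * (T.card : ℝ)) = ρstar) :
    ∃ i : ℕ,
      (1 - ε / 2)⁻¹ ^ i / Real.sqrt (Fintype.card V) ≤ Real.sqrt (Fintype.card V) ∧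
      (1 - ε) * ρstar ≤
        rhoGt E ((1 - ε / 2)⁻¹ ^ i / Real.sqrt (Fintype.card V)) := by
  obtain ⟨S, T, hS, hT, heq⟩ := hρstar_mem
  have hn1 : (1:ℝ) ≤ (Fintype.card V : ℝ) := by exact_mod_cast hn
  have hsqn : 1 ≤ Real.sqrt (Fintype.card V) := by
    rw [show (1:ℝ) = Real.sqrt 1 by simp]
    exact Real.sqrt_le_sqrt hn1
  have hsqn0 : 0 < Real.sqrt (Fintype.card V) := by linarith
  have hs1 : (1:ℝ) ≤ (S.card : ℝ) := Nat.one_le_cast.mpr hS.card_pos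
  have hm1 : (1:ℝ) ≤ (T.card : ℝ) := Nat.one_le_cast.mpr hT.card_pos
  have hsn : (S.card : ℝ) ≤ (Fintype.card V : ℝ) := Nat.cast_le.mpr S.card_le_univ
  have hmn : (T.card : ℝ) ≤ (Fintype.card V : ℝ) := Nat.cast_le.mpr T.card_le_univ
  set u := Real.sqrt (S.card : ℝ) with hudef
  set v := Real.sqrt (T.card : ℝ) with hvdef
  have hu1 : 1 ≤ u := by
    rw [hudef, show (1:ℝ) = Real.sqrt 1 by simp]; exact Real.sqrt_le_sqrt hs1
  have hv1 : 1 ≤ v := by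
    rw [hvdef, show (1:ℝ) = Real.sqrt 1 by simp]; exact Real.sqrt_le_sqrt hm1
  have hun : u ≤ Real.sqrt (Fintype.card V) := Real.sqrt_le_sqrt hsn
  have hvn : v ≤ Real.sqrt (Fintype.card V) := Real.sqrt_le_sqrt hmn
  have hu0 : 0 < u := by linarith
  have hv0 : 0 < v := by linarith
  have hhalf : 0 < 1 - ε/2 := by linarith
  set q := (1 - ε/2)⁻¹ with hqdef
  have hqmul : (1 - ε/2) * q = 1 := by
    rw [hqdef]; exact mul_inv_cancel₀ (ne_of_gt hhalf)
  have hq1 : 1 < q := by rw [hqdef]; exact (one_lt_inv₀ hhalf).2 (by linarith)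
  have hq0 : 0 < q := by linarith
  have hx1 : 1 ≤ u * Real.sqrt (Fintype.card V) / v := by
    rw [le_div_iff₀ hv0, one_mul]
    exact hvn.trans (le_mul_of_one_le_left hsqn0.le hu1)
  obtain ⟨i, hi1, hi2⟩ := exists_pow_grid q _ hq1 hx1
  rw [le_div_iff₀ hv0] at hi1
  rw [div_lt_iff₀ hv0, pow_succ] at hi2
  have hqi0 : 0 < q ^ i := pow_pos hq0 i
  refine ⟨i, ?_, ?_⟩
  · rw [div_le_iff₀ hsqn0]
    calc q ^ i = q ^ i * 1 := (mul_one _).symm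
      _ ≤ q ^ i * v := mul_le_mul_of_nonneg_left hv1 hqi0.le
      _ ≤ u * Real.sqrt (Fintype.card V) := hi1
      _ ≤ Real.sqrt (Fintype.card V) * Real.sqrt (Fintype.card V) :=
          mul_le_mul_of_nonneg_right hun hsqn0.le
  set t := q ^ i / Real.sqrt (Fintype.card V) with ht
  have ht0 : 0 < t := div_pos hqi0 hsqn0
  set a := t * v with hadef
  have ha1 : a ≤ u := by
    rw [hadef, ht, div_mul_eq_mul_div, div_le_iff₀ hsqn0]
    exact hi1
  have ha2 : (1 - ε/2) * u < a := by
    rw [hadef, ht, div_mul_eq_mul_div, lt_div_iff₀ hsqn0]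
    have h5 : (1 - ε/2) * (q ^ i * q * v) = q ^ i * v := by
      have h : (1 - ε/2) * (q ^ i * q * v) = ((1 - ε/2) * q) * (q ^ i * v) := by ring
      rw [h, hqmul, one_mul]
    have h6 := mul_lt_mul_of_pos_left hi2 hhalf
    rw [h5] at h6
    calc (1 - ε/2) * u * Real.sqrt (Fintype.card V)
        = (1 - ε/2) * (u * Real.sqrt (Fintype.card V)) := by ring
      _ < q ^ i * v := h6
  have key : (1 - ε) * (u^2 + a^2) ≤ 2*a*u := core_ineq ε u a hε0 hε1 hu0 ha1 ha2
  have hsu : (S.card : ℝ) = u^2 := (Real.sq_sqrt (by linarith)).symm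
  have hmv : (T.card : ℝ) = v^2 := (Real.sq_sqrt (by linarith)).symm
  have hsm : Real.sqrt ((S.card : ℝ) * (T.card : ℝ)) = u * v :=
    Real.sqrt_mul (by linarith) _
  set N := ((E.filter (fun p => p.1 ∈ S ∧ p.2 ∈ T)).card : ℝ) with hNdef
  have hN0 : 0 ≤ N := Nat.cast_nonneg _
  have hρ : ρstar = N / (u * v) := by rw [← heq, hsm]
  have hD0 : 0 < (S.card : ℝ) / t + t * (T.card : ℝ) :=
    add_pos (div_pos (by linarith) ht0) (mul_pos ht0 (by linarith))
  have hDt : ((S.card : ℝ) / t + t * (T.card : ℝ)) * t = u^2 + a^2 := by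
    rw [hadef, hsu, hmv]; field_simp
  have hmain : (1 - ε) * ρstar ≤ 2 * N / ((S.card : ℝ) / t + t * (T.card : ℝ)) := by
    rw [hρ, mul_div_assoc', div_le_div_iff₀ (mul_pos hu0 hv0) hD0]
    have step : (1 - ε) * ((S.card : ℝ) / t + t * (T.card : ℝ)) ≤ 2 * (u * v) := by
      rw [← mul_le_mul_iff_of_pos_right ht0, mul_assoc, hDt]
      calc (1 - ε) * (u^2 + a^2) ≤ 2*a*u := key
        _ = 2 * (u * v) * t := by rw [hadef]; ring
    have h7 : N * ((1 - ε) * ((S.card : ℝ) / t + t * (T.card : ℝ)))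
        ≤ N * (2 * (u * v)) := mul_le_mul_of_nonneg_left step hN0
    calc (1 - ε) * N * ((S.card : ℝ) / t + t * (T.card : ℝ))
        = N * ((1 - ε) * ((S.card : ℝ) / t + t * (T.card : ℝ))) := by ring
      _ ≤ N * (2 * (u * v)) := h7
      _ = 2 * N * (u * v) := by ring
  unfold rhoGt
  refine hmain.trans (le_csSup ?_ ⟨S, T, Or.inl hS, rfl⟩)
  refine ⟨2 * E.card / min t t⁻¹, ?_⟩
  rintro y ⟨S', T', hne, rfl⟩
  have hmin0 : 0 < min t t⁻¹ := lt_min ht0 (inv_pos.2 ht0)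
  have hD' : min t t⁻¹ ≤ (S'.card : ℝ) / t + t * (T'.card : ℝ) := by
    rcases hne with h | h
    · have h1 : (1:ℝ) ≤ (S'.card : ℝ) := Nat.one_le_cast.mpr h.card_pos
      have h2 : t⁻¹ ≤ (S'.card : ℝ) / t := by
        rw [div_eq_mul_inv]
        exact le_mul_of_one_le_left (inv_pos.2 ht0).le h1
      have h3 : (0:ℝ) ≤ t * (T'.card : ℝ) := mul_nonneg ht0.le (Nat.cast_nonneg _)
      calc min t t⁻¹ ≤ t⁻¹ := min_le_right _ _
        _ ≤ _ := h2.trans (le_add_of_nonneg_right h3)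
    · have h1 : (1:ℝ) ≤ (T'.card : ℝ) := Nat.one_le_cast.mpr h.card_pos
      have h2 : t ≤ t * (T'.card : ℝ) := le_mul_of_one_le_right ht0.le h1
      have h3 : (0:ℝ) ≤ (S'.card : ℝ) / t := div_nonneg (Nat.cast_nonneg _) ht0.le
      calc min t t⁻¹ ≤ t := min_le_left _ _
        _ ≤ _ := h2.trans (le_add_of_nonneg_left h3)
  have hc : ((E.filter (fun p => p.1 ∈ S' ∧ p.2 ∈ T')).card : ℝ) ≤ (E.card : ℝ) :=
    Nat.cast_le.mpr (card_filter_le E _)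
  exact div_le_div₀ (mul_nonneg (by norm_num) (Nat.cast_nonneg _)) (by linarith) hmin0 hD'
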